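/- Let V be a finite set, f : 2^V → ℝ≥0 monotone with f(∅) = 0, and g : 2^V → ℝ≥0 strictly monotone with g(∅) = 0. Suppose at least one locally maximin allocation exists. Then an allocation is lexicographically optimal if and only if it is locally maximin; moreover, any two such allocations induce the same density vector (x_v/y_v)_{v∈V}. -/

import Mathlib

open Finset

variable {V : Type*} [Fintype V] [DecidableEq V]

/-- A set function is supermodular. -/
def Supermodular (f : Finset V → ℝ) : Prop :=
  ∀ A B : Finset V, f A + f B ≤ f (A ∩ B) + f (A ∪ B)

/-- A set function is submodular. -/
def Submodular (g : Finset V → ℝ) : Prop :=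
  ∀ A B : Finset V, g (A ∩ B) + g (A ∪ B) ≤ g A + g B

/-- A set function is monotone. -/
def MonotoneFn (f : Finset V → ℝ) : Prop :=
  ∀ A B : Finset V, A ⊆ B → f A ≤ f B

/-- A set function is strictly monotone. -/
def StrictMonoFn (g : Finset V → ℝ) : Prop :=
  ∀ A B : Finset V, A ⊂ B → g A < g B

/-- A dual-modular instance `(V; f, g)`: `f` is a nonnegative monotone supermodular
reward function, `g` is a nonnegative strictly monotone submodular cost function,
both vanishing on the empty set. -/
structure DualModular (f g : Finset V → ℝ) : Prop where
  f_nonneg : ∀ A, 0 ≤ f A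
  g_nonneg : ∀ A, 0 ≤ g A
  f_empty : f ∅ = 0
  g_empty : g ∅ = 0
  f_mono : MonotoneFn f
  g_strictMono : StrictMonoFn g
  f_supermodular : Supermodular f
  g_submodular : Submodular g

/-- Density of a subset. -/
noncomputable def density (f g : Finset V → ℝ) (S : Finset V) : ℝ := f S / g S

/-- Marginal contribution `h(S|A) = h(S ∪ A) - h(A)`. -/
def marginal (h : Finset V → ℝ) (S A : Finset V) : ℝ := h (S ∪ A) - h A

/-- Marginal density `ρ(S|A) = f(S|A)/g(S|A)`. -/
noncomputable def margDensity (f g : Finset V → ℝ) (S A : Finset V) : ℝ :=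
  marginal f S A / marginal g S A

/-- `S_{<i}`: the union of earlier parts in an indexed family. -/
def below {k : ℕ} (S : Fin k → Finset V) (i : Fin k) : Finset V :=
  (Finset.univ.filter (fun j => j < i)).biUnion S

/-- The density decomposition `V = S₁ ∪ … ∪ S_k`: each `S i` is a nonempty maximal
densest subset of the remaining instance with marginal functions. -/
structure IsDensityDecomposition (f g : Finset V → ℝ) {k : ℕ} (S : Fin k → Finset V) :
    Prop where
  nonempty : ∀ i, (S i).Nonempty
  disj : ∀ i, Disjoint (S i) (below S i)
  cover : Finset.univ.biUnion S = (Finset.univ : Finset V)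
  maxDensity : ∀ i, ∀ T : Finset V, T.Nonempty → Disjoint T (below S i) →
    margDensity f g T (below S i) ≤ margDensity f g (S i) (below S i)
  maximal : ∀ i, ∀ T : Finset V, T.Nonempty → Disjoint T (below S i) →
    margDensity f g (S i) (below S i) ≤ margDensity f g T (below S i) → T ⊆ S i

/-- `ρ_i`, the density of the `i`-th component of the decomposition. -/
noncomputable def decompDensity (f g : Finset V → ℝ) {k : ℕ} (S : Fin k → Finset V)
    (i : Fin k) : ℝ :=
  margDensity f g (S i) (below S i)

/-- Membership in the base contrapolymatroid `B≥_f`. -/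
def memBf (f : Finset V → ℝ) (x : V → ℝ) : Prop :=
  (∀ v, 0 ≤ x v) ∧ (∑ v, x v = f Finset.univ) ∧ ∀ A : Finset V, f A ≤ ∑ v ∈ A, x v

/-- Membership in the base polymatroid `B≤_g`. -/
def memBg (g : Finset V → ℝ) (y : V → ℝ) : Prop :=
  (∀ v, 0 ≤ y v) ∧ (∑ v, y v = g Finset.univ) ∧ ∀ A : Finset V, ∑ v ∈ A, y v ≤ g A

/-- An allocation is a pair `(x, y) ∈ B≥_f × B≤_g`. -/
def Allocation (f g : Finset V → ℝ) (x y : V → ℝ) : Prop := memBf f x ∧ memBg g y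

/-- The locally maximin condition for an allocation. -/
def LocallyMaximin (f g : Finset V → ℝ) (x y : V → ℝ) : Prop :=
  ∀ ρ : ℝ, 0 < ρ →
    (∑ v ∈ Finset.univ.filter (fun v => ρ ≤ x v / y v), x v
       = f (Finset.univ.filter (fun v => ρ ≤ x v / y v))) ∧
    (∑ v ∈ Finset.univ.filter (fun v => ρ ≤ x v / y v), y v
       = g (Finset.univ.filter (fun v => ρ ≤ x v / y v)))

/-- The multiset of induced densities, sorted in non-increasing order. -/
noncomputable def sortedDensities (x y : V → ℝ) : List ℝ :=
  ((Finset.univ.val.map (fun v => x v / y v)).sort (· ≤ ·)).reverse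

/-- An allocation is lexicographically optimal if its non-increasingly sorted density
vector is lexicographically minimal among all allocations. -/
def LexOptimal (f g : Finset V → ℝ) (x y : V → ℝ) : Prop :=
  Allocation f g x y ∧
  ∀ x' y' : V → ℝ, Allocation f g x' y' → sortedDensities x y ≤ sortedDensities x' y'

/-- The hockey-stick divergence `HS_γ(x ‖ y)`. -/
noncomputable def HS (γ : ℝ) (x y : V → ℝ) : ℝ := ∑ u, max (x u - γ * y u) 0

/-- The `θ`-divergence `D_θ(x ‖ y) = Σ_u y_u · θ(x_u / y_u)`. -/
noncomputable def Dtheta (θ : ℝ → ℝ) (x y : V → ℝ) : ℝ := ∑ u, y u * θ (x u / y u)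

/-- Permutations of `V`, encoded as bijections to positions `Fin |V|`;
`u ≺_σ v` iff `σ u < σ v`. -/
abbrev Perms (V : Type*) [Fintype V] := V ≃ Fin (Fintype.card V)

/-- `h^σ(u)`: the marginal contribution of `u` given the elements preceding it in `σ`. -/
def permVal (h : Finset V → ℝ) (σ : Perms V) (u : V) : ℝ :=
  h (insert u (Finset.univ.filter (fun w => σ w < σ u))) -
    h (Finset.univ.filter (fun w => σ w < σ u))

/-- A probability distribution on permutations of `V`. -/
def IsDist (p : Perms V → ℝ) : Prop := (∀ σ, 0 ≤ p σ) ∧ ∑ σ, p σ = 1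

/-- `h^p(u) = Σ_σ p_σ · h^σ(u)`. -/
noncomputable def distVal (h : Finset V → ℝ) (p : Perms V → ℝ) (u : V) : ℝ :=
  ∑ σ, p σ * permVal h σ u

/-- The density induced by a solution `(p, q)`. -/
noncomputable def solDensity (f g : Finset V → ℝ) (p q : Perms V → ℝ) (v : V) : ℝ :=
  distVal f p v / distVal g q v

/-- A solution `(p, q)` is locally maximin if whenever `u` has strictly larger induced
density than `v`, every permutation with positive weight puts `u` before `v`. -/
def LocallyMaximinSol (f g : Finset V → ℝ) (p q : Perms V → ℝ) : Prop :=
  ∀ u v : V, solDensity f g p q v < solDensity f g p q u →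
    ∀ σ : Perms V, (0 < p σ ∨ 0 < q σ) → σ u < σ v

/-- The convex-program objective `Φ_θ(p, q) = D_θ(f^p ‖ g^q)`. -/
noncomputable def Phi (θ : ℝ → ℝ) (f g : Finset V → ℝ) (p q : Perms V → ℝ) : ℝ :=
  Dtheta θ (distVal f p) (distVal g q)

private lemma lex_of_filter_count (μ : ℝ) :
    ∀ (l l' : List ℝ), l.Pairwise (fun a b => b ≤ a) → l'.Pairwise (fun a b => b ≤ a) →
      l.filter (fun a => decide (μ < a)) = l'.filter (fun a => decide (μ < a)) →
      l.countP (fun a => decide (a = μ)) < l'.countP (fun a => decide (a = μ)) →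
      List.Lex (· < ·) l l'
  | _, [], _, _, _, hc => absurd hc (by simp)
  | [], _ :: _, _, _, _, _ => List.Lex.nil
  | a :: l, b :: l', hs, hs', hf, hc => by
    have hsl := hs.of_cons
    have hsl' := hs'.of_cons
    by_cases haμ : μ < a
    · by_cases hbμ : μ < b
      · simp only [List.filter_cons, haμ, hbμ, if_true, decide_eq_true_eq, if_pos,
          List.cons.injEq] at hf
        obtain ⟨heq, hf2⟩ := hf
        subst heq
        have hc2 : l.countP (fun a => decide (a = μ)) < l'.countP (fun a => decide (a = μ)) := by
          simpa [List.countP_cons, haμ.ne'] using hc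
        exact List.Lex.cons (lex_of_filter_count μ l l' hsl hsl' hf2 hc2)
      · exfalso
        have hnil : (b :: l').filter (fun a => decide (μ < a)) = [] := by
          apply List.filter_eq_nil_iff.mpr
          intro c hc'
          rcases List.mem_cons.mp hc' with rfl | hcl
          · simpa using hbμ
          · have : c ≤ b := List.rel_of_pairwise_cons hs' hcl
            simp only [decide_eq_true_eq]
            intro h; exact hbμ (lt_of_lt_of_le h this)
        rw [hnil] at hf
        simp [List.filter_cons, haμ] at hf
    · by_cases hbμ : μ < b
      · exfalso
        have hnil : (a :: l).filter (fun a => decide (μ < a)) = [] := by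
          apply List.filter_eq_nil_iff.mpr
          intro c hc'
          rcases List.mem_cons.mp hc' with rfl | hcl
          · simpa using haμ
          · have : c ≤ a := List.rel_of_pairwise_cons hs hcl
            simp only [decide_eq_true_eq]
            intro h; exact haμ (lt_of_lt_of_le h this)
        rw [hnil] at hf
        simp [List.filter_cons, hbμ] at hf
      · push_neg at haμ hbμ
        have hbeq : b = μ := by
          have hpos : 0 < (b :: l').countP (fun a => decide (a = μ)) :=
            lt_of_le_of_lt (Nat.zero_le _) hc
          obtain ⟨c, hcmem, hcp⟩ := List.countP_pos_iff.mp hpos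
          have hceq : c = μ := by simpa using hcp
          rcases List.mem_cons.mp hcmem with rfl | hcl
          · exact hceq
          · have : c ≤ b := List.rel_of_pairwise_cons hs' hcl
            exact le_antisymm hbμ (hceq ▸ this)
        by_cases haeq : a = μ
        · have hf2 : l.filter (fun x => decide (μ < x)) = l'.filter (fun x => decide (μ < x)) := by
            have h1 : l.filter (fun x => decide (μ < x)) = [] := by
              apply List.filter_eq_nil_iff.mpr
              intro c hcl
              have : c ≤ μ := haeq ▸ List.rel_of_pairwise_cons hs hcl
              simp only [decide_eq_true_eq]; exact fun h => absurd this (not_le.mpr h)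
            have h2 : l'.filter (fun x => decide (μ < x)) = [] := by
              apply List.filter_eq_nil_iff.mpr
              intro c hcl
              have : c ≤ μ := hbeq ▸ List.rel_of_pairwise_cons hs' hcl
              simp only [decide_eq_true_eq]; exact fun h => absurd this (not_le.mpr h)
            rw [h1, h2]
          have hc2' : l.countP (fun x => decide (x = μ)) < l'.countP (fun x => decide (x = μ)) := by
            simp only [List.countP_cons, haeq, hbeq, decide_true] at hc
            omega
          rw [haeq, hbeq]
          exact List.Lex.cons (lex_of_filter_count μ l l' hsl hsl' hf2 hc2')
        · have : a < μ := lt_of_le_of_ne haμ haeq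
          exact List.Lex.rel (hbeq ▸ this)

private lemma desc_sorted (M : Multiset ℝ) :
    (M.sort (· ≤ ·)).reverse.Pairwise (fun a b => b ≤ a) := by
  rw [List.pairwise_reverse]
  exact Multiset.pairwise_sort _ _

private lemma lex_desc (μ : ℝ) (M M' : Multiset ℝ)
    (hf : M.filter (fun a => μ < a) = M'.filter (fun a => μ < a))
    (hc : M.countP (fun a => a = μ) < M'.countP (fun a => a = μ)) :
    List.Lex (· < ·) (M.sort (· ≤ ·)).reverse (M'.sort (· ≤ ·)).reverse := by
  set l := M.sort (· ≤ ·) with hl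
  set l' := M'.sort (· ≤ ·) with hl'
  have hcoel : (l : Multiset ℝ) = M := Multiset.sort_eq _ _
  have hcoel' : (l' : Multiset ℝ) = M' := Multiset.sort_eq _ _
  apply lex_of_filter_count μ
  · exact desc_sorted M
  · exact desc_sorted M'
  · rw [List.filter_reverse, List.filter_reverse]
    congr 1
    refine (fun hp h1 h2 => List.Perm.eq_of_pairwise' (r := (· ≤ ·)) h1 h2 hp) ?_ ?_ ?_
    · rw [← Multiset.coe_eq_coe]
      have e1 : ((l.filter (fun a => decide (μ < a)) : List ℝ) : Multiset ℝ)
          = M.filter (fun a => μ < a) := by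
        rw [← hcoel, Multiset.filter_coe]
      have e2 : ((l'.filter (fun a => decide (μ < a)) : List ℝ) : Multiset ℝ)
          = M'.filter (fun a => μ < a) := by
        rw [← hcoel', Multiset.filter_coe]
      rw [e1, e2, hf]
    · exact List.Pairwise.filter _ (Multiset.pairwise_sort _ _)
    · exact List.Pairwise.filter _ (Multiset.pairwise_sort _ _)
  · rw [List.countP_reverse, List.countP_reverse]
    have e1 : l.countP (fun a => decide (a = μ)) = M.countP (fun a => a = μ) := by
      rw [← hcoel, Multiset.coe_countP]
    have e2 : l'.countP (fun a => decide (a = μ)) = M'.countP (fun a => a = μ) := by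
      rw [← hcoel', Multiset.coe_countP]
    rw [e1, e2]; exact hc

private lemma filter_map_congr {α : Type*} (s : Multiset α) (d d' : α → ℝ) (p : ℝ → Prop)
    [DecidablePred p] (h : ∀ v ∈ s, p (d v) → d v = d' v) (h' : ∀ v ∈ s, p (d' v) → d v = d' v) :
    (s.map d).filter p = (s.map d').filter p := by
  rw [Multiset.filter_map, Multiset.filter_map]
  have hst : s.filter (p ∘ d) = s.filter (p ∘ d') := by
    apply Multiset.filter_congr
    intro v hv
    simp only [Function.comp_apply]
    constructor
    · intro hp; rw [← h v hv hp]; exact hp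
    · intro hp; rw [h' v hv hp]; exact hp
  rw [hst]
  apply Multiset.map_congr rfl
  intro v hv
  have := Multiset.mem_filter.mp hv
  exact h' v this.1 this.2

section MainAux

variable {V : Type*} [Fintype V] [DecidableEq V]

private lemma ypos_of_memBg {g : Finset V → ℝ} (hgsm : StrictMonoFn g) {y : V → ℝ}
    (hy : memBg g y) (v : V) : 0 < y v := by
  obtain ⟨hnn, hsum, hle⟩ := hy
  have h1 : ∑ u ∈ univ.erase v, y u ≤ g (univ.erase v) := hle _
  have h2 : g (univ.erase v) < g univ := hgsm _ _ (Finset.erase_ssubset (mem_univ v))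
  have h3 : y v + ∑ u ∈ univ.erase v, y u = ∑ u, y u := Finset.add_sum_erase _ _ (mem_univ v)
  linarith

private lemma main_ind {f g : Finset V → ℝ}
    (hf0 : f ∅ = 0) (hg0 : g ∅ = 0) (hgsm : StrictMonoFn g)
    {x y x' y' : V → ℝ}
    (hx : memBf f x) (hy : memBg g y) (hx' : memBf f x') (hy' : memBg g y')
    (hmm : LocallyMaximin f g x y) :
    ∀ (n : ℕ) (W : Finset V), (univ \ W).card ≤ n →
      (∀ v ∈ W, ∀ u, x v / y v ≤ x u / y u → u ∈ W) →
      (∑ v ∈ W, x v = f W) → (∑ v ∈ W, y v = g W) →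
      (∑ v ∈ W, x' v = f W) → (∑ v ∈ W, y' v = g W) →
      (∀ v ∈ W, x v / y v = x' v / y' v) →
      List.Lex (· < ·) (sortedDensities x y) (sortedDensities x' y') ∨
      ((∀ v, x v / y v = x' v / y' v) ∧
        ∀ B : Finset V, (∀ v ∈ B, ∀ u, x v / y v ≤ x u / y u → u ∈ B) → W ⊆ B →
          (∑ v ∈ B, x' v = f B) ∧ (∑ v ∈ B, y' v = g B)) := by
  have hyp : ∀ v, 0 < y v := ypos_of_memBg hgsm hy
  have hyp' : ∀ v, 0 < y' v := ypos_of_memBg hgsm hy'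
  intro n
  induction n with
  | zero =>
    intro W hcard _ _ _ hx'W hy'W hagree
    have hWuniv : W = univ := by
      have h0 : univ \ W = ∅ := Finset.card_eq_zero.mp (Nat.le_zero.mp hcard)
      have : univ ⊆ W := by
        intro v hv
        by_contra hvW
        have : v ∈ univ \ W := Finset.mem_sdiff.mpr ⟨hv, hvW⟩
        rw [h0] at this
        exact absurd this (Finset.notMem_empty v)
      exact Finset.univ_subset_iff.mp this
    subst hWuniv
    right
    refine ⟨fun v => hagree v (mem_univ v), fun B _ hWB => ?_⟩
    have hBuniv : B = univ := Finset.univ_subset_iff.mp hWB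
    subst hBuniv
    exact ⟨hx'.2.1, hy'.2.1⟩
  | succ n ih =>
    intro W hcard hclosed hxW hyW hx'W hy'W hagree
    by_cases hWuniv : W = univ
    · subst hWuniv
      right
      refine ⟨fun v => hagree v (mem_univ v), fun B _ hWB => ?_⟩
      have hBuniv : B = univ := Finset.univ_subset_iff.mp hWB
      subst hBuniv
      exact ⟨hx'.2.1, hy'.2.1⟩
    · have hne : (univ \ W).Nonempty := by
        rw [Finset.sdiff_nonempty]
        intro h
        exact hWuniv (Finset.univ_subset_iff.mp h)
      obtain ⟨u₀, hu₀mem, hu₀max⟩ := Finset.exists_max_image (univ \ W) (fun v => x v / y v) hne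
      have hu₀W : u₀ ∉ W := (Finset.mem_sdiff.mp hu₀mem).2
      set ρ := x u₀ / y u₀ with hρdef
      have hρnn : 0 ≤ ρ := div_nonneg (hx.1 u₀) (hyp u₀).le
      have houtside : ∀ u, u ∉ W → x u / y u ≤ ρ := fun u hu =>
        hu₀max u (Finset.mem_sdiff.mpr ⟨mem_univ u, hu⟩)
      have hWlt : ∀ v ∈ W, ρ < x v / y v := by
        intro v hv
        by_contra h
        push_neg at h
        exact hu₀W (hclosed v hv u₀ h)
      set A := univ.filter (fun v => ρ ≤ x v / y v) with hAdef
      have hWA : W ⊆ A := fun v hv => Finset.mem_filter.mpr ⟨mem_univ v, (hWlt v hv).le⟩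
      have hu₀A : u₀ ∈ A := Finset.mem_filter.mpr ⟨mem_univ u₀, le_refl ρ⟩
      have hu₀AW : u₀ ∈ A \ W := Finset.mem_sdiff.mpr ⟨hu₀A, hu₀W⟩
      have hAeq : ∀ v ∈ A \ W, x v / y v = ρ := by
        intro v hv
        have h1 := Finset.mem_sdiff.mp hv
        exact le_antisymm (houtside v h1.2) (Finset.mem_filter.mp h1.1).2
      have hAuniv : ρ = 0 → A = univ := by
        intro h0
        apply Finset.eq_univ_of_forall
        intro v
        exact Finset.mem_filter.mpr ⟨mem_univ v, h0 ▸ div_nonneg (hx.1 v) (hyp v).le⟩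
      have hxyA : (∑ v ∈ A, x v = f A) ∧ (∑ v ∈ A, y v = g A) := by
        rcases eq_or_lt_of_le hρnn with h0 | hpos
        · rw [hAuniv h0.symm]
          exact ⟨hx.2.1, hy.2.1⟩
        · exact hmm ρ hpos
      have hxdy : ∀ v, x v = (x v / y v) * y v := fun v => (div_mul_cancel₀ _ (hyp v).ne').symm
      have hx'dy : ∀ v, x' v = (x' v / y' v) * y' v :=
        fun v => (div_mul_cancel₀ _ (hyp' v).ne').symm
      have e1 : ∑ v ∈ A \ W, x v = f A - f W := by
        have := Finset.sum_sdiff (f := x) hWA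
        rw [hxyA.1] at this; linarith
      have e2 : ∑ v ∈ A \ W, y v = g A - g W := by
        have := Finset.sum_sdiff (f := y) hWA
        rw [hxyA.2] at this; linarith
      have e3 : ∑ v ∈ A \ W, x v = ρ * ∑ v ∈ A \ W, y v := by
        rw [Finset.mul_sum]
        apply Finset.sum_congr rfl
        intro v hv
        rw [hxdy v, hAeq v hv]
      have keyf : f A - f W = ρ * (g A - g W) := by
        rw [← e2]; linarith
      have s1 : ∑ v ∈ A \ W, x' v = (∑ v ∈ A, x' v) - f W := by
        have := Finset.sum_sdiff (f := x') hWA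
        rw [hx'W] at this; linarith
      have s2 : ∑ v ∈ A \ W, y' v = (∑ v ∈ A, y' v) - g W := by
        have := Finset.sum_sdiff (f := y') hWA
        rw [hy'W] at this; linarith
      have hfA : f A ≤ ∑ v ∈ A, x' v := hx'.2.2 A
      have hgA : ∑ v ∈ A, y' v ≤ g A := hy'.2.2 A
      have hmul : ρ * ((∑ v ∈ A, y' v) - g W) ≤ ρ * (g A - g W) :=
        mul_le_mul_of_nonneg_left (by linarith) hρnn
      have key' : 0 ≤ ∑ v ∈ A \ W, (x' v - ρ * y' v) := by
        have expand : ∑ v ∈ A \ W, (x' v - ρ * y' v)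
            = (∑ v ∈ A \ W, x' v) - ρ * (∑ v ∈ A \ W, y' v) := by
          rw [Finset.sum_sub_distrib, Finset.mul_sum]
        rw [expand, s1, s2]
        linarith
      by_cases hbig : ∃ u, u ∉ W ∧ ρ < x' u / y' u
      · -- Case 1: lex strict
        left
        obtain ⟨u₁, hu₁mem, hu₁max⟩ :=
          Finset.exists_max_image (univ \ W) (fun v => x' v / y' v) hne
        have hu₁W : u₁ ∉ W := (Finset.mem_sdiff.mp hu₁mem).2
        set μ := x' u₁ / y' u₁ with hμdef
        have hmax' : ∀ u, u ∉ W → x' u / y' u ≤ μ := fun u hu =>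
          hu₁max u (Finset.mem_sdiff.mpr ⟨mem_univ u, hu⟩)
        have hμρ : ρ < μ := by
          obtain ⟨u, huW, hu⟩ := hbig
          exact lt_of_lt_of_le hu (hmax' u huW)
        have hmemW : ∀ v, μ < x v / y v → v ∈ W := by
          intro v h
          by_contra hvW
          exact absurd (houtside v hvW) (by linarith)
        have hmemW' : ∀ v, μ < x' v / y' v → v ∈ W := by
          intro v h
          by_contra hvW
          exact absurd (hmax' v hvW) (by linarith)
        have hmemWeq : ∀ v, x v / y v = μ → v ∈ W := by
          intro v h
          by_contra hvW
          exact absurd (houtside v hvW) (by rw [h]; exact not_le.mpr hμρ)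
        unfold sortedDensities
        apply lex_desc μ
        · apply filter_map_congr
          · intro v _ hp
            exact hagree v (hmemW v hp)
          · intro v _ hp
            exact hagree v (hmemW' v hp)
        · rw [Multiset.countP_map, Multiset.countP_map]
          have hcard1 : Multiset.filter (fun a => x a / y a = μ) univ.val
              = (univ.filter (fun a => x a / y a = μ)).val := (Finset.filter_val _ _).symm
          have hcard2 : Multiset.filter (fun a => x' a / y' a = μ) univ.val
              = (univ.filter (fun a => x' a / y' a = μ)).val := (Finset.filter_val _ _).symm
          rw [hcard1, hcard2]
          have hEE' : univ.filter (fun a => x a / y a = μ)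
              ⊂ univ.filter (fun a => x' a / y' a = μ) := by
            rw [Finset.ssubset_iff_of_subset]
            · refine ⟨u₁, Finset.mem_filter.mpr ⟨mem_univ u₁, rfl⟩, ?_⟩
              intro hmem
              have := (Finset.mem_filter.mp hmem).2
              have := houtside u₁ hu₁W
              linarith
            · intro v hv
              have hveq := (Finset.mem_filter.mp hv).2
              have hvW := hmemWeq v hveq
              exact Finset.mem_filter.mpr ⟨mem_univ v, by rw [← hagree v hvW]; exact hveq⟩
          exact Finset.card_lt_card hEE'
      · -- Case 2: recurse
        push_neg at hbig
        have hall : ∀ v ∈ A \ W, x' v / y' v = ρ := by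
          by_contra hcon
          push_neg at hcon
          obtain ⟨v₀, hv₀, hv₀ne⟩ := hcon
          have hterm : ∀ v ∈ A \ W, x' v - ρ * y' v ≤ (fun _ => (0 : ℝ)) v := by
            intro v hv
            have h1 := hbig v (Finset.mem_sdiff.mp hv).2
            have h2 := mul_le_mul_of_nonneg_right h1 (hyp' v).le
            rw [← hx'dy v] at h2
            simpa using by linarith
          have hstrict : x' v₀ - ρ * y' v₀ < (fun _ => (0 : ℝ)) v₀ := by
            have h1 := hbig v₀ (Finset.mem_sdiff.mp hv₀).2
            have h2 : x' v₀ / y' v₀ < ρ := lt_of_le_of_ne h1 hv₀ne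
            have h3 := mul_lt_mul_of_pos_right h2 (hyp' v₀)
            rw [← hx'dy v₀] at h3
            simpa using by linarith
          have hlt := Finset.sum_lt_sum hterm ⟨v₀, hv₀, hstrict⟩
          simp only [Finset.sum_const_zero] at hlt
          linarith
        have hx'Asum : ∑ v ∈ A \ W, x' v = ρ * ∑ v ∈ A \ W, y' v := by
          rw [Finset.mul_sum]
          apply Finset.sum_congr rfl
          intro v hv
          rw [hx'dy v, hall v hv]
        have hy'A : ∑ v ∈ A, y' v = g A := by
          rcases eq_or_lt_of_le hρnn with h0 | hpos
          · rw [hAuniv h0.symm]; exact hy'.2.1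
          · have h1 : ρ * (g A - g W) ≤ ρ * ((∑ v ∈ A, y' v) - g W) := by
              rw [← keyf]
              have : (∑ v ∈ A \ W, x' v) = (∑ v ∈ A, x' v) - f W := s1
              rw [s2] at hx'Asum
              linarith
            have h2 : g A - g W ≤ (∑ v ∈ A, y' v) - g W := le_of_mul_le_mul_left h1 hpos
            linarith
        have hx'A : ∑ v ∈ A, x' v = f A := by
          rw [s2, hy'A] at hx'Asum
          rw [s1] at hx'Asum
          linarith
        have hAclosed : ∀ v ∈ A, ∀ u, x v / y v ≤ x u / y u → u ∈ A := by
          intro v hv u h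
          exact Finset.mem_filter.mpr ⟨mem_univ u, le_trans (Finset.mem_filter.mp hv).2 h⟩
        have hAagree : ∀ v ∈ A, x v / y v = x' v / y' v := by
          intro v hv
          by_cases hvW : v ∈ W
          · exact hagree v hvW
          · have hv' : v ∈ A \ W := Finset.mem_sdiff.mpr ⟨hv, hvW⟩
            rw [hAeq v hv', hall v hv']
        have hcard' : (univ \ A).card ≤ n := by
          have hss : univ \ A ⊂ univ \ W := by
            refine ⟨Finset.sdiff_subset_sdiff (Finset.Subset.refl _) hWA, ?_⟩
            intro hsub
            have h1 : u₀ ∈ univ \ W := hu₀mem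
            have h2 : u₀ ∉ univ \ A := fun h => (Finset.mem_sdiff.mp h).2 hu₀A
            exact h2 (hsub h1)
          have := Finset.card_lt_card hss
          omega
        rcases ih A hcard' hAclosed hxyA.1 hxyA.2 hx'A hy'A hAagree with hlex | ⟨hdall, htights⟩
        · exact Or.inl hlex
        · right
          refine ⟨hdall, fun B hBclosed hWB => ?_⟩
          by_cases hBW : B = W
          · subst hBW
            exact ⟨hx'W, hy'W⟩
          · have hWB' : W ⊂ B := lt_of_le_of_ne hWB (Ne.symm hBW)
            obtain ⟨u, huB, huW⟩ := Finset.exists_of_ssubset hWB'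
            have hAB : A ⊆ B := by
              intro v hv
              exact hBclosed u huB v (le_trans (houtside u huW) (Finset.mem_filter.mp hv).2)
            exact htights B hBclosed hAB

end MainAux

section MainAux2

variable {V : Type*} [Fintype V] [DecidableEq V]

private lemma main_dichotomy {f g : Finset V → ℝ}
    (hf0 : f ∅ = 0) (hg0 : g ∅ = 0) (hgsm : StrictMonoFn g)
    {x y x' y' : V → ℝ}
    (hxy : Allocation f g x y) (hmm : LocallyMaximin f g x y)
    (hxy' : Allocation f g x' y') :
    List.Lex (· < ·) (sortedDensities x y) (sortedDensities x' y') ∨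
    ((∀ v, x v / y v = x' v / y' v) ∧ LocallyMaximin f g x' y') := by
  obtain ⟨hx, hy⟩ := hxy
  obtain ⟨hx', hy'⟩ := hxy'
  have h := main_ind hf0 hg0 hgsm hx hy hx' hy' hmm (univ \ (∅ : Finset V)).card ∅ le_rfl
    (fun v hv => absurd hv (Finset.notMem_empty v))
    (by simp [hf0]) (by simp [hg0]) (by simp [hf0]) (by simp [hg0])
    (fun v hv => absurd hv (Finset.notMem_empty v))
  rcases h with hlex | ⟨hd, ht⟩
  · exact Or.inl hlex
  · right
    refine ⟨hd, fun ρ hρ => ?_⟩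
    have hfil : univ.filter (fun v => ρ ≤ x' v / y' v) = univ.filter (fun v => ρ ≤ x v / y v) :=
      Finset.filter_congr (fun v _ => by rw [hd v])
    rw [hfil]
    apply ht
    · intro v hv u h
      exact Finset.mem_filter.mpr ⟨mem_univ u, le_trans (Finset.mem_filter.mp hv).2 h⟩
    · exact Finset.empty_subset _

private lemma sorted_eq_of_density_eq {x y x' y' : V → ℝ}
    (hd : ∀ v, x v / y v = x' v / y' v) :
    sortedDensities x y = sortedDensities x' y' := by
  unfold sortedDensities
  rw [show (fun v => x v / y v) = fun v => x' v / y' v from funext hd]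

end MainAux2

/-- if a locally maximin allocation exists, then an allocation is
lexicographically optimal iff it is locally maximin, and any two such allocations
induce the same density vector. -/
theorem lex_optimal_iff_locally_maximin (f g : Finset V → ℝ)
    (hf0 : f ∅ = 0) (hfnn : ∀ A, 0 ≤ f A) (hfmono : MonotoneFn f)
    (hg0 : g ∅ = 0) (hgnn : ∀ A, 0 ≤ g A) (hgsm : StrictMonoFn g)
    (hex : ∃ x y : V → ℝ, Allocation f g x y ∧ LocallyMaximin f g x y) :
    (∀ x y : V → ℝ, Allocation f g x y →
      (LexOptimal f g x y ↔ LocallyMaximin f g x y)) ∧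
    (∀ x y x' y' : V → ℝ, Allocation f g x y → Allocation f g x' y' →
      LocallyMaximin f g x y → LocallyMaximin f g x' y' →
      ∀ v : V, x v / y v = x' v / y' v) := by
  obtain ⟨x₀, y₀, hA₀, hM₀⟩ := hex
  have hle : ∀ x y x' y' : V → ℝ, Allocation f g x y → LocallyMaximin f g x y →
      Allocation f g x' y' → sortedDensities x y ≤ sortedDensities x' y' := by
    intro x y x' y' hxy hmm hxy'
    rcases main_dichotomy hf0 hg0 hgsm hxy hmm hxy' with hlex | ⟨hd, _⟩
    · exact le_of_lt hlex
    · exact le_of_eq (sorted_eq_of_density_eq hd)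
  constructor
  · intro x y hxy
    constructor
    · intro hLO
      have h1 := hle x₀ y₀ x y hA₀ hM₀ hxy
      have h2 := hLO.2 x₀ y₀ hA₀
      have heq : sortedDensities x₀ y₀ = sortedDensities x y := le_antisymm h1 h2
      rcases main_dichotomy hf0 hg0 hgsm hA₀ hM₀ hxy with hlex | ⟨_, hmm'⟩
      · exact absurd heq (ne_of_lt hlex)
      · exact hmm'
    · intro hmm
      exact ⟨hxy, fun x' y' hxy' => hle x y x' y' hxy hmm hxy'⟩
  · intro x y x' y' hxy hxy' hm hm' v
    have h1 := hle x y x' y' hxy hm hxy'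
    have h2 := hle x' y' x y hxy' hm' hxy
    have heq := le_antisymm h1 h2
    rcases main_dichotomy hf0 hg0 hgsm hxy hm hxy' with hlex | ⟨hd, _⟩
    · exact absurd heq (ne_of_lt hlex)
    · exact hd v
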